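/- Let v_1, …, v_N ∈ ℝ^n be fixed vectors and let H(q,p) = ½⟨p,p⟩ + Σ_{i=1}^N exp(⟨v_i, q⟩) on ℝ^{2n}, where ⟨·,·⟩ is the standard inner product. If (q(t), p(t)) is a solution of Hamilton's equations q̇_k = ∂H/∂p_k, ṗ_k = −∂H/∂q_k, then the functions a_i(t) = −exp(⟨v_i, q(t)⟩) and b_i(t) = ⟨v_i, p(t)⟩, i = 1, …, N, satisfy the polynomial system ȧ_k = a_k b_k and ḃ_k = Σ_{i=1}^N M_{ki} a_i for k = 1, …, N, where M_{ki} = ⟨v_k, v_i⟩. -/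

import Mathlib

/-- The Hamiltonian with exponential interaction:
`H(q,p) = ½⟨p,p⟩ + Σ_{i=1}^N exp(⟨v_i, q⟩)` on `ℝ^{2n}`. -/
noncomputable def expHam (n N : ℕ) (v : Fin N → Fin n → ℝ) :
    (Fin n → ℝ) → (Fin n → ℝ) → ℝ := fun q p =>
  (1 / 2) * ∑ k, p k * p k + ∑ i, Real.exp (∑ k, v i k * q k)

lemma hamP (n N : ℕ) (v : Fin N → Fin n → ℝ) (Q P : Fin n → ℝ) (k : Fin n) :
    HasDerivAt (fun x => expHam n N v Q (Function.update P k x)) (P k) (P k) := by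
  have hfun : (fun x => expHam n N v Q (Function.update P k x)) =
      fun x => (1 / 2) * (x * x + ∑ j ∈ Finset.univ.erase k, P j * P j)
        + ∑ i, Real.exp (∑ j, v i j * Q j) := by
    funext x
    unfold expHam
    congr 2
    rw [← Finset.add_sum_erase Finset.univ
      (fun j => Function.update P k x j * Function.update P k x j) (Finset.mem_univ k)]
    rw [Function.update_self]
    congr 1
    refine Finset.sum_congr rfl fun j hj => ?_
    rw [Function.update_of_ne (Finset.ne_of_mem_erase hj)]
  rw [hfun]
  have h0 : HasDerivAt (fun x : ℝ => x * x) (1 * P k + P k * 1) (P k) :=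
    (hasDerivAt_id' (P k)).mul (hasDerivAt_id' (P k))
  have h := (((h0.add_const (∑ j ∈ Finset.univ.erase k, P j * P j)).const_mul
      (1 / 2 : ℝ)).add_const (∑ i, Real.exp (∑ j, v i j * Q j)))
  exact h.congr_deriv (by ring)

lemma hamQ (n N : ℕ) (v : Fin N → Fin n → ℝ) (Q P : Fin n → ℝ) (k : Fin n) :
    HasDerivAt (fun x => expHam n N v (Function.update Q k x) P)
      (∑ i, v i k * Real.exp (∑ j, v i j * Q j)) (Q k) := by
  have hfun : (fun x => expHam n N v (Function.update Q k x) P) =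
      fun x => (1 / 2) * ∑ j, P j * P j
        + ∑ i, Real.exp (v i k * x + ∑ j ∈ Finset.univ.erase k, v i j * Q j) := by
    funext x
    unfold expHam
    congr 1
    refine Finset.sum_congr rfl fun i _ => ?_
    congr 1
    rw [← Finset.add_sum_erase Finset.univ
      (fun j => v i j * Function.update Q k x j) (Finset.mem_univ k), Function.update_self]
    congr 1
    refine Finset.sum_congr rfl fun j hj => ?_
    rw [Function.update_of_ne (Finset.ne_of_mem_erase hj)]
  rw [hfun]
  have h : HasDerivAt (fun x : ℝ => (1 / 2) * ∑ j, P j * P j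
        + ∑ i, Real.exp (v i k * x + ∑ j ∈ Finset.univ.erase k, v i j * Q j))
      (∑ i, Real.exp (v i k * Q k + ∑ j ∈ Finset.univ.erase k, v i j * Q j) * (v i k * 1))
      (Q k) := by
    refine HasDerivAt.const_add _ ?_
    exact HasDerivAt.fun_sum fun i _ =>
      (((hasDerivAt_id' (Q k)).const_mul (v i k)).add_const _).exp
  convert h using 1
  refine Finset.sum_congr rfl fun i _ => ?_
  rw [← Finset.add_sum_erase Finset.univ (fun j => v i j * Q j) (Finset.mem_univ k)]
  ring

/-- If `(q(t), p(t))` solves Hamilton's equations for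
`H(q,p) = ½⟨p,p⟩ + Σ_i exp(⟨v_i,q⟩)`, then `a_i = −exp(⟨v_i,q⟩)`, `b_i = ⟨v_i,p⟩`
satisfy `ȧ_k = a_k b_k`, `ḃ_k = Σ_i M_{ki} a_i` with `M_{ki} = ⟨v_k, v_i⟩`. -/
theorem flaschka_transform (n N : ℕ) (v : Fin N → Fin n → ℝ)
    (q p : ℝ → Fin n → ℝ)
    (hq : ∀ (t : ℝ) (k : Fin n), HasDerivAt (fun s => q s k)
      (deriv (fun x => expHam n N v (q t) (Function.update (p t) k x)) (p t k)) t)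
    (hp : ∀ (t : ℝ) (k : Fin n), HasDerivAt (fun s => p s k)
      (-(deriv (fun x => expHam n N v (Function.update (q t) k x) (p t)) (q t k))) t) :
    ∀ (t : ℝ) (k : Fin N),
      HasDerivAt (fun s => -Real.exp (∑ j, v k j * q s j))
        ((-Real.exp (∑ j, v k j * q t j)) * (∑ j, v k j * p t j)) t ∧
      HasDerivAt (fun s => ∑ j, v k j * p s j)
        (∑ i, (∑ j, v k j * v i j) * (-Real.exp (∑ j, v i j * q t j))) t := by
  intro t k
  have hq' : ∀ m : Fin n, HasDerivAt (fun s => q s m) (p t m) t := fun m => by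
    have := hq t m
    rwa [(hamP n N v (q t) (p t) m).deriv] at this
  have hp' : ∀ m : Fin n, HasDerivAt (fun s => p s m)
      (-(∑ i, v i m * Real.exp (∑ j, v i j * q t j))) t := fun m => by
    have := hp t m
    rwa [(hamQ n N v (q t) (p t) m).deriv] at this
  constructor
  · have h1 : HasDerivAt (fun s => ∑ j, v k j * q s j) (∑ j, v k j * p t j) t :=
      HasDerivAt.fun_sum fun j _ => (hq' j).const_mul _
    have := h1.exp.neg
    exact this.congr_deriv (by ring)
  · have h2 : HasDerivAt (fun s => ∑ j, v k j * p s j)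
        (∑ j, v k j * -(∑ i, v i j * Real.exp (∑ l, v i l * q t l))) t :=
      HasDerivAt.fun_sum fun j _ => (hp' j).const_mul _
    convert h2 using 1
    have : ∀ j : Fin n, v k j * -(∑ i, v i j * Real.exp (∑ l, v i l * q t l))
        = ∑ i, (v k j * v i j) * (-Real.exp (∑ l, v i l * q t l)) := by
      intro j
      rw [mul_neg, Finset.mul_sum, ← Finset.sum_neg_distrib]
      exact Finset.sum_congr rfl fun i _ => by ring
    simp only [this]
    rw [Finset.sum_comm]
    exact Finset.sum_congr rfl fun i _ => Finset.sum_mul _ _ _
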